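/- Let ν>2 and set m = √(ν/(ν−2)). Then for every x∈ℝ, the function x ↦ m·φ_{ν−2}(x/m) is differentiable with derivative −x·φ_ν(x), where φ_ν denotes the standard Student-t density with ν degrees of freedom. Consequently, the function τ_ν(x) = x·Φ_ν(x) + m·φ_{ν−2}(x/m) is differentiable with τ_ν′(x) = Φ_ν(x) for all x∈ℝ, where Φ_ν is the cumulative distribution function of φ_ν; in particular τ_ν is nondecreasing. -/

import Mathlib

open MeasureTheory

/-- The standard Student-t density with `ν` degrees of freedom. -/
noncomputable def tpdf (ν x : ℝ) : ℝ :=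
  Real.Gamma ((ν + 1) / 2) / (Real.sqrt (ν * Real.pi) * Real.Gamma (ν / 2)) *
    (1 + x ^ 2 / ν) ^ (-((ν + 1) / 2))

/-- The cumulative distribution function of the standard Student-t distribution
with `ν` degrees of freedom. -/
noncomputable def tcdf (ν x : ℝ) : ℝ := ∫ t in Set.Iic x, tpdf ν t

/-- `τ_ν(x) = x·Φ_ν(x) + √(ν/(ν−2))·φ_{ν−2}(x/√(ν/(ν−2)))`. -/
noncomputable def tau (ν x : ℝ) : ℝ :=
  x * tcdf ν x +
    Real.sqrt (ν / (ν - 2)) * tpdf (ν - 2) (x / Real.sqrt (ν / (ν - 2)))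

lemma tpdf_nonneg (ν : ℝ) (hν : 0 < ν) (x : ℝ) : 0 ≤ tpdf ν x := by
  unfold tpdf
  have h1 := Real.Gamma_pos_of_pos (show 0 < (ν+1)/2 by linarith)
  have h2 := Real.Gamma_pos_of_pos (show 0 < ν/2 by linarith)
  have h3 : 0 < Real.sqrt (ν * Real.pi) := Real.sqrt_pos.2 (by positivity)
  positivity

lemma tpdf_continuous (ν : ℝ) (hν : 0 < ν) : Continuous (tpdf ν) := by
  unfold tpdf
  refine continuous_const.mul (Continuous.rpow_const (by continuity) fun x => Or.inl ?_)
  positivity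

lemma integrable_tpdf (ν : ℝ) (hν : 1 < ν) : Integrable (tpdf ν) := by
  have h0 : (0:ℝ) < ν := by linarith
  unfold tpdf
  apply Integrable.const_mul
  have hcont : Continuous (fun x : ℝ => ((1:ℝ) + x ^ 2 / ν) ^ (-((ν+1)/2))) := by
    refine Continuous.rpow_const (by continuity) fun x => Or.inl ?_
    positivity
  have hbase : Integrable (fun x : ℝ => ((1:ℝ) + ‖x‖ ^ 2) ^ (-(ν+1)/2)) volume :=
    integrable_rpow_neg_one_add_norm_sq (by simp; linarith)
  refine (hbase.const_mul (ν ^ ((ν+1)/2))).mono'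
    hcont.aestronglyMeasurable (Filter.Eventually.of_forall fun x => ?_)
  have hb : (0:ℝ) < 1 + x ^ 2 / ν := by positivity
  rw [Real.norm_eq_abs, abs_of_pos (Real.rpow_pos_of_pos hb _)]
  have hle : (1 + x ^ 2) / ν ≤ 1 + x ^ 2 / ν := by
    rw [add_div]
    have : 1/ν ≤ 1 := by rw [div_le_one h0]; linarith
    linarith
  calc (1 + x ^ 2 / ν) ^ (-((ν+1)/2)) ≤ ((1 + x ^ 2)/ν) ^ (-((ν+1)/2)) := by
        apply Real.rpow_le_rpow_of_nonpos (by positivity) hle (by linarith)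
    _ = ν ^ ((ν+1)/2) * ((1:ℝ) + ‖x‖ ^ 2) ^ (-(ν+1)/2) := by
        rw [Real.div_rpow (by positivity) h0.le, Real.rpow_neg h0.le, Real.norm_eq_abs, sq_abs]
        rw [div_eq_mul_inv, mul_comm, neg_div, inv_inv]

lemma hasDerivAt_tcdf (ν : ℝ) (hν : 1 < ν) (x : ℝ) : HasDerivAt (tcdf ν) (tpdf ν x) x := by
  have hint := integrable_tpdf ν hν
  have hcont := tpdf_continuous ν (by linarith)
  have hd : HasDerivAt (fun y => (∫ t in (0:ℝ)..y, tpdf ν t) + tcdf ν 0) (tpdf ν x) x := by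
    apply HasDerivAt.add_const
    exact intervalIntegral.integral_hasDerivAt_right (hint.intervalIntegrable)
      hcont.stronglyMeasurable.stronglyMeasurableAtFilter hcont.continuousAt
  refine hd.congr_of_eventuallyEq (Filter.Eventually.of_forall fun y => ?_)
  show tcdf ν y = (∫ t in (0:ℝ)..y, tpdf ν t) + tcdf ν 0
  rw [← intervalIntegral.integral_Iic_sub_Iic hint.integrableOn hint.integrableOn]
  unfold tcdf
  ring

lemma const_id (ν : ℝ) (hν : 2 < ν) :
    Real.sqrt (ν/(ν-2)) * (Real.Gamma ((ν-2+1)/2) / (Real.sqrt ((ν-2)*Real.pi) * Real.Gamma ((ν-2)/2))) * ((ν-1)/ν)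
    = Real.Gamma ((ν+1)/2) / (Real.sqrt (ν*Real.pi) * Real.Gamma (ν/2)) := by
  have hν0 : (0:ℝ) < ν := by linarith
  have hν2 : (0:ℝ) < ν - 2 := by linarith
  have e1 : (ν+1)/2 = (ν-1)/2 + 1 := by ring
  have e2 : ν/2 = (ν-2)/2 + 1 := by ring
  have e3 : (ν-2+1)/2 = (ν-1)/2 := by ring
  rw [e1, e2, e3, Real.Gamma_add_one (show (0:ℝ) < (ν-1)/2 by linarith).ne',
    Real.Gamma_add_one (show (0:ℝ) < (ν-2)/2 by linarith).ne',
    Real.sqrt_div hν0.le, Real.sqrt_mul hν2.le, Real.sqrt_mul hν0.le]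
  have ha : 0 < Real.sqrt ν := Real.sqrt_pos.2 hν0
  have hb : 0 < Real.sqrt (ν-2) := Real.sqrt_pos.2 hν2
  have hc : 0 < Real.sqrt Real.pi := Real.sqrt_pos.2 Real.pi_pos
  have hG1 : 0 < Real.Gamma ((ν-1)/2) := Real.Gamma_pos_of_pos (by linarith)
  have hG2 : 0 < Real.Gamma ((ν-2)/2) := Real.Gamma_pos_of_pos (by linarith)
  field_simp
  ring_nf
  rw [Real.sq_sqrt hν0.le, Real.sq_sqrt (show (0:ℝ) ≤ -2+ν by linarith)]
  ring

lemma part1 (ν : ℝ) (hν : 2 < ν) (m : ℝ) (hm : m = Real.sqrt (ν / (ν - 2))) (x : ℝ) :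
    HasDerivAt (fun x : ℝ => m * tpdf (ν - 2) (x / m)) (-(x * tpdf ν x)) x := by
  have hν0 : (0:ℝ) < ν := by linarith
  have hν2 : (0:ℝ) < ν - 2 := by linarith
  have hmpos : 0 < m := by rw [hm]; exact Real.sqrt_pos.2 (by positivity)
  have hm2 : m ^ 2 = ν / (ν - 2) := by rw [hm, Real.sq_sqrt (by positivity)]
  set C' : ℝ := Real.Gamma ((ν-2+1)/2) / (Real.sqrt ((ν-2)*Real.pi) * Real.Gamma ((ν-2)/2)) with hC'
  set C : ℝ := Real.Gamma ((ν+1)/2) / (Real.sqrt (ν*Real.pi) * Real.Gamma (ν/2)) with hC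
  set q : ℝ := -((ν-1)/2) with hq
  have hfun : ∀ y : ℝ, m * tpdf (ν - 2) (y / m) = (m * C') * (1 + y ^ 2 / ν) ^ q := by
    intro y
    have harg : (y / m) ^ 2 / (ν - 2) = y ^ 2 / ν := by
      rw [div_pow, hm2]
      field_simp
    have hexp : -((ν - 2 + 1) / 2) = q := by rw [hq]; ring
    unfold tpdf
    rw [harg, hexp]
    ring
  have hinner : HasDerivAt (fun y : ℝ => 1 + y ^ 2 / ν) (2 * x / ν) x := by
    have := ((hasDerivAt_pow 2 x).div_const ν).const_add 1
    simpa using this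
  have hb : (0:ℝ) < 1 + x ^ 2 / ν := by positivity
  have hrpow : HasDerivAt (fun y : ℝ => (1 + y ^ 2 / ν) ^ q)
      (2 * x / ν * q * (1 + x ^ 2 / ν) ^ (q - 1)) x :=
    hinner.rpow_const (Or.inl hb.ne')
  have hmain := hrpow.const_mul (m * C')
  have heq : (m * C') * (2 * x / ν * q * (1 + x ^ 2 / ν) ^ (q - 1)) = -(x * tpdf ν x) := by
    have hexp2 : q - 1 = -((ν + 1) / 2) := by rw [hq]; ring
    unfold tpdf
    rw [hexp2]
    have hid := const_id ν hν
    rw [← hC', ← hC] at hid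
    have hmm : m * C' * ((ν-1)/ν) = C := by rw [hm]; exact hid
    linear_combination (-(x * (1 + x ^ 2 / ν) ^ (-((ν + 1) / 2)))) * hmm
  rw [heq] at hmain
  exact hmain.congr_of_eventuallyEq (Filter.Eventually.of_forall hfun)

/-- For `ν > 2` and `m = √(ν/(ν−2))`, the map `x ↦ m·φ_{ν−2}(x/m)`
has derivative `−x·φ_ν(x)` at every `x`; consequently `τ_ν` is differentiable with
`τ_ν′(x) = Φ_ν(x)`, and in particular `τ_ν` is nondecreasing. -/
theorem tau_deriv (ν : ℝ) (hν : 2 < ν) (m : ℝ) (hm : m = Real.sqrt (ν / (ν - 2))) :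
    (∀ x : ℝ, HasDerivAt (fun x : ℝ => m * tpdf (ν - 2) (x / m))
      (-(x * tpdf ν x)) x) ∧
    (∀ x : ℝ, HasDerivAt (fun x : ℝ => tau ν x) (tcdf ν x) x) ∧
    Monotone (tau ν) := by
  have h1 : ∀ x : ℝ, HasDerivAt (fun x : ℝ => m * tpdf (ν - 2) (x / m))
      (-(x * tpdf ν x)) x := fun x => part1 ν hν m hm x
  have h2 : ∀ x : ℝ, HasDerivAt (fun x : ℝ => tau ν x) (tcdf ν x) x := by
    intro x
    have hmul : HasDerivAt (fun y : ℝ => y * tcdf ν y)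
        (1 * tcdf ν x + x * tpdf ν x) x :=
      (hasDerivAt_id x).mul (hasDerivAt_tcdf ν (by linarith) x)
    have hsum := hmul.add (h1 x)
    have hfun : (fun y : ℝ => tau ν y) = fun y : ℝ => y * tcdf ν y + m * tpdf (ν - 2) (y / m) := by
      funext y
      unfold tau
      rw [hm]
    rw [hfun]
    have e : 1 * tcdf ν x + x * tpdf ν x + -(x * tpdf ν x) = tcdf ν x := by ring
    rw [e] at hsum
    exact hsum
  refine ⟨h1, h2, ?_⟩
  have hnn : ∀ x : ℝ, 0 ≤ tcdf ν x := fun x =>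
    setIntegral_nonneg measurableSet_Iic fun t _ => tpdf_nonneg ν (by linarith) t
  apply monotone_of_deriv_nonneg
  · exact fun x => (h2 x).differentiableAt
  · intro x
    rw [(h2 x).deriv]
    exact hnn x
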